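/- arXiv:1302.6485 — 3 statements merged into one kernel-verified Lean document; each statement's English description precedes it below -/
import Mathlib

section
/- For all positive integers n and m, the following identity of polynomials in x over ℚ holds: $\sum_{r=0}^{n-1}\sum_{s=0}^{r}\sum_{k=0}^{s} \frac{\binom{r}{s}\binom{n-1}{r}\binom{s}{k}}{\binom{2n-1-r}{n}}\,(-n)^{s-k}\, S_2(2n-1-r,n)\, S_k^{(n)}(m)\, x^{r-s} \;=\; \sum_{r=0}^{n-1}\sum_{s=0}^{r} \frac{\binom{r}{s}\binom{n-1}{r}}{\binom{s+n}{n}\binom{2n-1-r}{n}}\, S_2(s+n,n)\, S_2(2n-1-r,n)\, m^{n+s}\, B_{r-s}^{(n)}(x)$. -/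
open PowerSeries Polynomial Finset

/-- Stirling numbers of the second kind `S₂(n,k)`: the number of partitions of an
    `n`-element set into `k` nonempty blocks, via the recurrence
    `S₂(n+1,k+1) = (k+1)·S₂(n,k+1) + S₂(n,k)`. -/
def stirling2 : ℕ → ℕ → ℕ
  | 0, 0 => 1
  | 0, _ + 1 => 0
  | _ + 1, 0 => 0
  | n + 1, k + 1 => (k + 1) * stirling2 n (k + 1) + stirling2 n k

/-- The weighted sum `v₁ + 2v₂ + ⋯ + m·v_m` of a tuple `v : Fin m → ℕ`. -/
def tupleWeight (m : ℕ) (v : Fin m → ℕ) : ℕ := ∑ i : Fin m, (i.1 + 1) * v i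

/-- The multiple power sum
    `S_k^{(n)}(m) = ∑_{0 ≤ v₁,…,v_m ≤ n, v₁+⋯+v_m = n} (n choose v₁,…,v_m) (v₁+2v₂+⋯+m·v_m)^k`. -/
noncomputable def multiPowerSum (n m k : ℕ) : ℚ :=
  ∑ v ∈ (Fintype.piFinset fun _ : Fin m => Finset.range (n + 1)).filter
      (fun v => ∑ i : Fin m, v i = n),
    (Nat.multinomial Finset.univ v : ℚ) * (tupleWeight m v : ℚ) ^ k

/-- The formal power series `(e^t - 1)/t = ∑_k t^k/(k+1)!` over `ℚ[y]`. -/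
noncomputable def bexp : PowerSeries (Polynomial ℚ) :=
  PowerSeries.mk fun k => Polynomial.C (((k + 1).factorial : ℚ)⁻¹)

/-- The formal power series `e^{yt} = ∑_k y^k t^k/k!` over `ℚ[y]` (with `y = X`). -/
noncomputable def expPoly : PowerSeries (Polynomial ℚ) :=
  PowerSeries.mk fun k => Polynomial.C ((k.factorial : ℚ)⁻¹) * Polynomial.X ^ k

/-- The Bernoulli polynomial `B_n^{(α)}(y)` of order `α`, defined by
    `(t/(e^t-1))^α e^{yt} = ∑_n B_n^{(α)}(y) t^n/n!`. -/
noncomputable def bernoulliH (α n : ℕ) : Polynomial ℚ :=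
  (n.factorial : ℚ) • PowerSeries.coeff n
    ((PowerSeries.invOfUnit bexp 1) ^ α * expPoly)

noncomputable def Eexp (a : ℚ) : PowerSeries (Polynomial ℚ) :=
  PowerSeries.rescale (Polynomial.C a) (PowerSeries.exp (Polynomial ℚ))

lemma coeff_Eexp (a : ℚ) (k : ℕ) :
    PowerSeries.coeff k (Eexp a) = Polynomial.C (a ^ k / k.factorial) := by
  rw [Eexp, PowerSeries.coeff_rescale, PowerSeries.coeff_exp, Polynomial.algebraMap_eq,
    ← Polynomial.C_pow, ← map_mul, mul_one_div]

lemma Eexp_mul (a b : ℚ) : Eexp a * Eexp b = Eexp (a + b) := by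
  simp [Eexp, PowerSeries.exp_mul_exp_eq_exp_add, ← map_add]

lemma Eexp_zero : Eexp 0 = 1 := by
  simp [Eexp, PowerSeries.rescale_zero]

lemma Eexp_pow (a : ℚ) (k : ℕ) : Eexp a ^ k = Eexp (k * a) := by
  induction k with
  | zero => simp [Eexp_zero]
  | succ k ih => rw [pow_succ, ih, Eexp_mul]; push_cast; ring_nf

lemma Eexp_sum {ι : Type*} (s : Finset ι) (f : ι → ℚ) :
    ∏ i ∈ s, Eexp (f i) = Eexp (∑ i ∈ s, f i) := by
  induction s using Finset.cons_induction with
  | empty => simp [Eexp_zero]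
  | cons a s ha ih => simp [Finset.prod_cons, Finset.sum_cons, ih, Eexp_mul]

lemma X_mul_bexp : (PowerSeries.X : PowerSeries (Polynomial ℚ)) * bexp = Eexp 1 - 1 := by
  ext k
  cases k with
  | zero =>
      have h1 : (PowerSeries.coeff 0) (Eexp 1 - 1) = 0 := by
        rw [map_sub, coeff_Eexp]; simp
      rw [h1]
      simp
  | succ k =>
      rw [PowerSeries.coeff_succ_X_mul, map_sub, coeff_Eexp, bexp, PowerSeries.coeff_mk]
      simp [Nat.factorial, one_div]

lemma stirling2_eq_zero : ∀ j n : ℕ, j < n → stirling2 j n = 0 := by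
  intro j
  induction j with
  | zero => intro n hn; match n, hn with | (k+1), _ => rfl
  | succ j ih =>
      intro n hn
      match n, hn with
      | (k+1), hn =>
        have h1 : j < k + 1 := by omega
        have h2 : j < k := by omega
        show (k+1) * stirling2 j (k+1) + stirling2 j k = 0
        rw [ih _ h1, ih _ h2]; simp

lemma derivativeFun_pow (f : PowerSeries (Polynomial ℚ)) (n : ℕ) :
    PowerSeries.derivativeFun (f ^ (n+1)) = (n+1 : ℕ) • (f ^ n * PowerSeries.derivativeFun f) := by
  induction n with
  | zero => simp
  | succ n ih =>
      rw [pow_succ, PowerSeries.derivativeFun_mul, ih]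
      simp only [smul_eq_mul, nsmul_eq_mul, Nat.cast_add, Nat.cast_one]
      ring

lemma coeff_derivativeFun' (f : PowerSeries (Polynomial ℚ)) (n : ℕ) :
    PowerSeries.coeff n (PowerSeries.derivativeFun f) = PowerSeries.coeff (n + 1) f * (n + 1) :=
  PowerSeries.coeff_derivative f n

lemma derivative_Eexp1 :
    PowerSeries.derivativeFun (Eexp 1 - 1) = Eexp 1 := by
  refine PowerSeries.ext fun k => ?_
  rw [coeff_derivativeFun', map_sub, PowerSeries.coeff_one, coeff_Eexp, coeff_Eexp]
  rw [if_neg (Nat.succ_ne_zero k), sub_zero]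
  have : ((k : ℚ[X]) + 1) = Polynomial.C ((k : ℚ) + 1) := by rw [map_add, map_one, map_natCast]
  rw [this, ← map_mul]
  congr 1
  rw [Nat.factorial_succ]
  have h1 : ((k.factorial : ℚ)) ≠ 0 := by exact_mod_cast k.factorial_ne_zero
  push_cast
  field_simp
  simp

lemma coeff_Eexp1_sub_one_pow (n j : ℕ) :
    PowerSeries.coeff j ((Eexp 1 - 1) ^ n)
      = Polynomial.C ((n.factorial : ℚ) * (stirling2 j n) / j.factorial) := by
  induction n generalizing j with
  | zero =>
      cases j with
      | zero => simp [stirling2]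
      | succ j => simp [show stirling2 (j+1) 0 = 0 from rfl, PowerSeries.coeff_one]
  | succ n ih =>
      induction j with
      | zero =>
          rw [PowerSeries.coeff_zero_eq_constantCoeff, map_pow]
          have : PowerSeries.constantCoeff (Eexp 1 - 1) = 0 := by
            rw [← PowerSeries.coeff_zero_eq_constantCoeff, map_sub, coeff_Eexp]; simp
          rw [this, zero_pow (Nat.succ_ne_zero n)]
          simp [show stirling2 0 (n+1) = 0 from rfl]
      | succ j ihj =>
          have hder : PowerSeries.derivativeFun ((Eexp 1 - 1) ^ (n+1))
              = ((n+1 : ℕ)) • ((Eexp 1 - 1) ^ (n+1) + (Eexp 1 - 1) ^ n) := by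
            rw [derivativeFun_pow, derivative_Eexp1]
            have h1 : Eexp 1 = (Eexp 1 - 1) + 1 := by ring
            rw [h1]
            simp only [smul_eq_mul, nsmul_eq_mul, Nat.cast_add, Nat.cast_one]
            ring
          have hthis := congrArg (PowerSeries.coeff j) hder
          rw [coeff_derivativeFun', map_nsmul, map_add, ihj, ih j] at hthis
          have hcj : ((j : ℚ[X]) + 1) = Polynomial.C ((j : ℚ) + 1) := by rw [map_add, map_one, map_natCast]
          rw [hcj] at hthis
          have hcne : (Polynomial.C ((j : ℚ) + 1)) ≠ 0 :=
            Polynomial.C_ne_zero.mpr (Nat.cast_add_one_ne_zero j)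
          apply mul_right_cancel₀ hcne
          rw [hthis]
          have hrec : stirling2 (j+1) (n+1) = (n+1) * stirling2 j (n+1) + stirling2 j n := rfl
          rw [hrec, nsmul_eq_mul, ← map_add]
          have : ((n+1 : ℕ) : ℚ[X]) = Polynomial.C ((n : ℚ) + 1) := by
            rw [Nat.cast_add, Nat.cast_one, map_add, map_one, map_natCast]
          rw [this, ← map_mul, ← map_mul]
          congr 1
          have h1 : ((j.factorial : ℚ)) ≠ 0 := by exact_mod_cast j.factorial_ne_zero
          have h2 : ((j : ℚ) + 1) ≠ 0 := Nat.cast_add_one_ne_zero j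
          rw [Nat.factorial_succ j, Nat.factorial_succ n]
          push_cast
          field_simp

lemma index_eq (n m : ℕ) :
    Finset.piAntidiag (Finset.univ : Finset (Fin m)) n
      = (Fintype.piFinset fun _ : Fin m => Finset.range (n + 1)).filter
          (fun v => ∑ i : Fin m, v i = n) := by
  ext v
  rw [Finset.mem_piAntidiag, Finset.mem_filter, Fintype.mem_piFinset]
  constructor
  · rintro ⟨h, -⟩
    refine ⟨fun i => ?_, h⟩
    rw [Finset.mem_range, Nat.lt_succ_iff]
    calc v i ≤ ∑ j : Fin m, v j :=
          Finset.single_le_sum (fun _ _ => Nat.zero_le _) (Finset.mem_univ i)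
    _ = n := h
  · rintro ⟨-, h⟩
    exact ⟨h, fun _ _ => Finset.mem_univ _⟩

lemma sum_Eexp_pow (n m : ℕ) :
    (∑ j : Fin m, Eexp ((j : ℚ) + 1)) ^ n
      = PowerSeries.mk (fun k => Polynomial.C (multiPowerSum n m k / k.factorial)) := by
  rw [Finset.sum_pow_eq_sum_piAntidiag]
  refine PowerSeries.ext fun k => ?_
  rw [PowerSeries.coeff_mk, multiPowerSum, ← index_eq, Finset.sum_div]
  simp only [map_sum]
  refine Finset.sum_congr rfl fun v hv => ?_
  have hprod : ∏ j : Fin m, Eexp ((j : ℚ) + 1) ^ v j = Eexp ((tupleWeight m v : ℚ)) := by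
    have h1 : ∀ j : Fin m, Eexp ((j : ℚ) + 1) ^ v j = Eexp ((v j : ℚ) * ((j : ℚ) + 1)) := by
      intro j; rw [Eexp_pow]
    simp only [h1]
    rw [Eexp_sum]
    congr 1
    rw [tupleWeight]
    push_cast
    exact Finset.sum_congr rfl fun j _ => mul_comm _ _
  rw [hprod]
  rw [show ((Nat.multinomial Finset.univ v : ℚ[X]⟦X⟧)) * Eexp ((tupleWeight m v : ℚ))
      = (Nat.multinomial Finset.univ v : ℕ) • Eexp ((tupleWeight m v : ℚ)) by
    rw [nsmul_eq_mul]]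
  rw [map_nsmul, coeff_Eexp, nsmul_eq_mul]
  rw [show ((Nat.multinomial Finset.univ v : ℚ[X]))
      = Polynomial.C ((Nat.multinomial Finset.univ v : ℚ)) from (map_natCast Polynomial.C _).symm,
    ← map_mul, mul_div_assoc]

lemma geom_Eexp (m : ℕ) :
    (Eexp 1 - 1) * (∑ j : Fin m, Eexp ((j : ℚ) + 1)) = Eexp ((m : ℚ) + 1) - Eexp 1 := by
  rw [Fin.sum_univ_eq_sum_range (fun j => Eexp ((j : ℚ) + 1)) m, Finset.mul_sum]
  have h1 : ∀ j ∈ Finset.range m, (Eexp 1 - 1) * Eexp ((j : ℚ) + 1)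
      = Eexp (((j+1 : ℕ) : ℚ) + 1) - Eexp ((j : ℚ) + 1) := by
    intro j _
    rw [sub_mul, one_mul, Eexp_mul]
    push_cast
    ring_nf
  rw [Finset.sum_congr rfl h1, Finset.sum_range_sub (fun j => Eexp ((j : ℚ) + 1))]
  simp

lemma bexp_mul_inv : bexp * PowerSeries.invOfUnit bexp 1 = 1 := by
  refine PowerSeries.mul_invOfUnit _ _ ?_
  have : PowerSeries.constantCoeff bexp = 1 := by
    rw [← PowerSeries.coeff_zero_eq_constantCoeff, bexp, PowerSeries.coeff_mk]
    simp
  rw [this]; rfl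

lemma Eexp_one_eq_exp : Eexp 1 = PowerSeries.exp (Polynomial ℚ) := by
  rw [Eexp, map_one, PowerSeries.rescale_one]; rfl

lemma coeff_Em_pow (m n j : ℕ) :
    PowerSeries.coeff j ((Eexp (m : ℚ) - 1) ^ n)
      = Polynomial.C ((m : ℚ) ^ j * ((n.factorial : ℚ) * (stirling2 j n) / j.factorial)) := by
  have h1 : Eexp (m : ℚ) - 1
      = PowerSeries.rescale (Polynomial.C (m : ℚ)) (Eexp 1 - 1) := by
    rw [map_sub, map_one, Eexp_one_eq_exp]
    rfl
  rw [h1, ← map_pow, PowerSeries.coeff_rescale, coeff_Eexp1_sub_one_pow, ← Polynomial.C_pow,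
    ← map_mul]

noncomputable def Hser (n m : ℕ) : PowerSeries (Polynomial ℚ) :=
  PowerSeries.mk fun s =>
    Polynomial.C ((n.factorial : ℚ) * (stirling2 (s + n) n) * (m : ℚ) ^ (n + s) / (s + n).factorial)

lemma X_pow_mul_Hser (n m : ℕ) :
    (PowerSeries.X : PowerSeries (Polynomial ℚ)) ^ n * Hser n m = (Eexp (m : ℚ) - 1) ^ n := by
  refine PowerSeries.ext fun j => ?_
  rw [PowerSeries.coeff_X_pow_mul', coeff_Em_pow]
  split_ifs with h
  · rw [Hser, PowerSeries.coeff_mk, Nat.sub_add_cancel h, Nat.add_sub_cancel' h]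
    congr 1
    ring
  · rw [stirling2_eq_zero j n (by omega)]
    simp

lemma bexp_pow_mul_Q (n m : ℕ) :
    bexp ^ n * (Eexp (-(n : ℚ)) * (∑ j : Fin m, Eexp ((j : ℚ) + 1)) ^ n) = Hser n m := by
  apply mul_left_cancel₀ (pow_ne_zero n (PowerSeries.X_ne_zero (R := Polynomial ℚ)))
  calc (PowerSeries.X : PowerSeries (Polynomial ℚ)) ^ n
        * (bexp ^ n * (Eexp (-(n : ℚ)) * (∑ j : Fin m, Eexp ((j : ℚ) + 1)) ^ n))
      = ((PowerSeries.X * bexp) ^ n) * (Eexp (-1) ^ n * (∑ j : Fin m, Eexp ((j : ℚ) + 1)) ^ n) := by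
        rw [mul_pow, Eexp_pow]
        have : (n : ℚ) * (-1) = -(n : ℚ) := by ring
        rw [this]
        ring
    _ = ((Eexp 1 - 1) * (Eexp (-1) * (∑ j : Fin m, Eexp ((j : ℚ) + 1)))) ^ n := by
        rw [X_mul_bexp, mul_pow, mul_pow]
    _ = (Eexp (m : ℚ) - 1) ^ n := by
        congr 1
        rw [mul_comm (Eexp (-1)) _, ← mul_assoc, geom_Eexp, sub_mul, Eexp_mul, Eexp_mul]
        rw [show (m : ℚ) + 1 + -1 = (m : ℚ) by ring, show (1 : ℚ) + -1 = 0 by ring, Eexp_zero]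
    _ = (PowerSeries.X : PowerSeries (Polynomial ℚ)) ^ n * Hser n m := (X_pow_mul_Hser n m).symm

lemma Q_eq (n m : ℕ) :
    (PowerSeries.invOfUnit bexp 1) ^ n * Hser n m
      = Eexp (-(n : ℚ)) * (∑ j : Fin m, Eexp ((j : ℚ) + 1)) ^ n := by
  rw [← bexp_pow_mul_Q n m, ← mul_assoc, ← mul_pow, mul_comm (PowerSeries.invOfUnit bexp 1) bexp,
    bexp_mul_inv, one_pow, one_mul]

lemma coeff_mul_range (f g : PowerSeries (Polynomial ℚ)) (r : ℕ) :
    PowerSeries.coeff r (f * g)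
      = ∑ s ∈ Finset.range (r + 1),
          PowerSeries.coeff (r - s) f * PowerSeries.coeff s g := by
  rw [PowerSeries.coeff_mul, Finset.Nat.sum_antidiagonal_eq_sum_range_succ
    (fun a b => PowerSeries.coeff a f * PowerSeries.coeff b g)]
  rw [← Finset.sum_range_reflect]
  refine Finset.sum_congr rfl fun j hj => ?_
  rw [Finset.mem_range] at hj
  have h1 : r + 1 - 1 - j = r - j := by omega
  have h2 : r - (r - j) = j := by omega
  rw [h1, h2]

lemma coeff_W (n m s : ℕ) :
    PowerSeries.coeff s (Eexp (-(n : ℚ)) * (∑ j : Fin m, Eexp ((j : ℚ) + 1)) ^ n)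
      = ∑ k ∈ Finset.range (s + 1),
          Polynomial.C ((-(n : ℚ)) ^ (s - k) / (s - k).factorial * (multiPowerSum n m k / k.factorial)) := by
  rw [coeff_mul_range, sum_Eexp_pow]
  refine Finset.sum_congr rfl fun k hk => ?_
  rw [coeff_Eexp, PowerSeries.coeff_mk, ← map_mul]

lemma C_mul_X_pow_mul_C (a b : ℚ) (e : ℕ) :
    Polynomial.C a * Polynomial.X ^ e * Polynomial.C b
      = Polynomial.C (a * b) * Polynomial.X ^ e := by
  rw [map_mul]; ring

lemma lhs_eq (n m r : ℕ) :
    (∑ s ∈ Finset.range (r + 1), ∑ k ∈ Finset.range (s + 1),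
        Polynomial.C ((r.choose s : ℚ) * (s.choose k : ℚ) * (-(n : ℚ)) ^ (s - k)
            * multiPowerSum n m k) * Polynomial.X ^ (r - s))
      = (r.factorial : ℚ) • PowerSeries.coeff r
          (expPoly * (Eexp (-(n : ℚ)) * (∑ j : Fin m, Eexp ((j : ℚ) + 1)) ^ n)) := by
  rw [coeff_mul_range, Finset.smul_sum]
  refine Finset.sum_congr rfl fun s hs => ?_
  rw [coeff_W, expPoly, PowerSeries.coeff_mk, Finset.mul_sum, Finset.smul_sum]
  refine Finset.sum_congr rfl fun k hk => ?_
  rw [Finset.mem_range, Nat.lt_succ_iff] at hs hk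
  rw [C_mul_X_pow_mul_C, Polynomial.smul_eq_C_mul, ← mul_assoc, ← map_mul]
  congr 2
  rw [Nat.cast_choose ℚ hs, Nat.cast_choose ℚ hk]
  have f1 : ((r - s).factorial : ℚ) ≠ 0 := by exact_mod_cast (r - s).factorial_ne_zero
  have f2 : ((s - k).factorial : ℚ) ≠ 0 := by exact_mod_cast (s - k).factorial_ne_zero
  have f3 : (k.factorial : ℚ) ≠ 0 := by exact_mod_cast k.factorial_ne_zero
  have f4 : (s.factorial : ℚ) ≠ 0 := by exact_mod_cast s.factorial_ne_zero
  field_simp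


lemma rhs_eq (n m r : ℕ) :
    (∑ s ∈ Finset.range (r + 1),
        Polynomial.C ((r.choose s : ℚ) / (((s + n).choose n : ℚ))
            * (stirling2 (s + n) n : ℚ) * (m : ℚ) ^ (n + s)) * bernoulliH n (r - s))
      = (r.factorial : ℚ) • PowerSeries.coeff r
          ((PowerSeries.invOfUnit bexp 1) ^ n * expPoly * Hser n m) := by
  rw [coeff_mul_range, Finset.smul_sum]
  refine Finset.sum_congr rfl fun s hs => ?_
  rw [Finset.mem_range, Nat.lt_succ_iff] at hs
  have hB : PowerSeries.coeff (r - s)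
      ((PowerSeries.invOfUnit bexp 1) ^ n * expPoly)
      = (((r - s).factorial : ℚ))⁻¹ • bernoulliH n (r - s) := by
    rw [bernoulliH, smul_smul, inv_mul_cancel₀
      (by exact_mod_cast (r - s).factorial_ne_zero), one_smul]
  rw [hB, Hser, PowerSeries.coeff_mk, Polynomial.smul_eq_C_mul, Polynomial.smul_eq_C_mul]
  have hre : ∀ (a b c : ℚ) (p : Polynomial ℚ),
      Polynomial.C a * (Polynomial.C b * p * Polynomial.C c)
        = Polynomial.C (a * b * c) * p := by
    intro a b c p
    rw [map_mul, map_mul]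
    ring
  rw [hre]
  congr 1
  have f1 : ((r - s).factorial : ℚ) ≠ 0 := by exact_mod_cast (r - s).factorial_ne_zero
  have f2 : (s.factorial : ℚ) ≠ 0 := by exact_mod_cast s.factorial_ne_zero
  have f3 : (n.factorial : ℚ) ≠ 0 := by exact_mod_cast n.factorial_ne_zero
  have f4 : ((s + n).factorial : ℚ) ≠ 0 := by exact_mod_cast (s + n).factorial_ne_zero
  have hcc : (((s + n).choose n : ℚ)) ≠ 0 := by
    have : 0 < (s + n).choose n := Nat.choose_pos (by omega)
    exact_mod_cast this.ne'
  rw [Nat.cast_choose ℚ hs, Nat.cast_choose ℚ (show n ≤ s + n by omega), Nat.add_sub_cancel]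
  field_simp

lemma key_lemma (n m r : ℕ) :
    (∑ s ∈ Finset.range (r + 1), ∑ k ∈ Finset.range (s + 1),
        Polynomial.C ((r.choose s : ℚ) * (s.choose k : ℚ) * (-(n : ℚ)) ^ (s - k)
            * multiPowerSum n m k) * Polynomial.X ^ (r - s))
      = ∑ s ∈ Finset.range (r + 1),
          Polynomial.C ((r.choose s : ℚ) / (((s + n).choose n : ℚ))
              * (stirling2 (s + n) n : ℚ) * (m : ℚ) ^ (n + s)) * bernoulliH n (r - s) := by
  rw [lhs_eq, rhs_eq]
  congr 2
  rw [show (PowerSeries.invOfUnit bexp 1) ^ n * expPoly * Hser n m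
      = expPoly * ((PowerSeries.invOfUnit bexp 1) ^ n * Hser n m) by ring, Q_eq]

/-- Theorem 2 of Kim–Kim: for `n, m ≥ 1`,
`∑_{r=0}^{n-1} ∑_{s=0}^{r} ∑_{k=0}^{s} (C(r,s)C(n-1,r)C(s,k)/C(2n-1-r,n)) (-n)^{s-k}
    S₂(2n-1-r,n) S_k^{(n)}(m) x^{r-s}
 = ∑_{r=0}^{n-1} ∑_{s=0}^{r} (C(r,s)C(n-1,r)/(C(s+n,n)C(2n-1-r,n)))
    S₂(s+n,n) S₂(2n-1-r,n) m^{n+s} B_{r-s}^{(n)}(x)`. -/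
theorem kim_thm3 (n m : ℕ) (hn : 0 < n) (hm : 0 < m) :
    (∑ r ∈ Finset.range n, ∑ s ∈ Finset.range (r + 1), ∑ k ∈ Finset.range (s + 1),
        Polynomial.C (((r.choose s : ℚ) * ((n - 1).choose r : ℚ) * (s.choose k : ℚ) /
            ((2 * n - 1 - r).choose n : ℚ)) * (-(n : ℚ)) ^ (s - k) *
            (stirling2 (2 * n - 1 - r) n : ℚ) * multiPowerSum n m k) *
          Polynomial.X ^ (r - s))
      = ∑ r ∈ Finset.range n, ∑ s ∈ Finset.range (r + 1),
          Polynomial.C (((r.choose s : ℚ) * ((n - 1).choose r : ℚ) /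
              (((s + n).choose n : ℚ) * ((2 * n - 1 - r).choose n : ℚ))) *
              (stirling2 (s + n) n : ℚ) * (stirling2 (2 * n - 1 - r) n : ℚ) *
              (m : ℚ) ^ (n + s)) *
            bernoulliH n (r - s) := by
  refine Finset.sum_congr rfl fun r hr => ?_
  set cr : ℚ := ((n - 1).choose r : ℚ) * (stirling2 (2 * n - 1 - r) n : ℚ)
      / ((2 * n - 1 - r).choose n : ℚ) with hcr
  calc (∑ s ∈ Finset.range (r + 1), ∑ k ∈ Finset.range (s + 1),
        Polynomial.C (((r.choose s : ℚ) * ((n - 1).choose r : ℚ) * (s.choose k : ℚ) /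
            ((2 * n - 1 - r).choose n : ℚ)) * (-(n : ℚ)) ^ (s - k) *
            (stirling2 (2 * n - 1 - r) n : ℚ) * multiPowerSum n m k) *
          Polynomial.X ^ (r - s))
      = Polynomial.C cr * ∑ s ∈ Finset.range (r + 1), ∑ k ∈ Finset.range (s + 1),
        Polynomial.C ((r.choose s : ℚ) * (s.choose k : ℚ) * (-(n : ℚ)) ^ (s - k)
            * multiPowerSum n m k) * Polynomial.X ^ (r - s) := by
        rw [Finset.mul_sum]
        refine Finset.sum_congr rfl fun s hs => ?_
        rw [Finset.mul_sum]
        refine Finset.sum_congr rfl fun k hk => ?_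
        rw [← mul_assoc, ← map_mul]
        congr 2
        rw [hcr]
        ring
    _ = Polynomial.C cr * ∑ s ∈ Finset.range (r + 1),
          Polynomial.C ((r.choose s : ℚ) / (((s + n).choose n : ℚ))
              * (stirling2 (s + n) n : ℚ) * (m : ℚ) ^ (n + s)) * bernoulliH n (r - s) := by
        rw [key_lemma]
    _ = _ := by
        rw [Finset.mul_sum]
        refine Finset.sum_congr rfl fun s hs => ?_
        rw [← mul_assoc, ← map_mul]
        congr 2
        rw [hcr]
        ring
end

section
/- For all positive integers n and m with m odd, the following identity of polynomials in x over ℚ holds: $E_{n-1}^{(n)}(x) \;=\; (-1)^{n} \sum_{s=0}^{n-1}\sum_{k=0}^{s} \binom{s}{k}\binom{n-1}{s}\,(-n)^{s-k}\, T_k^{(n)}(m)\, m^{n-s-1}\, E_{n-1-s}^{(n)}\!\left(\frac{x}{m}\right)$, where $E_{n-1-s}^{(n)}(x/m)$ denotes the polynomial $E_{n-1-s}^{(n)}$ evaluated with x replaced by x/m. -/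
open PowerSeries Polynomial Finset

/-- The multiple alternating power sum
    `T_k^{(n)}(m) = ∑_{0 ≤ v₁,…,v_m ≤ n, v₁+⋯+v_m = n}
       (n choose v₁,…,v_m) (-1)^{v₁+2v₂+⋯+m·v_m} (v₁+2v₂+⋯+m·v_m)^k`. -/
noncomputable def multiAltPowerSum (n m k : ℕ) : ℚ :=
  ∑ v ∈ (Fintype.piFinset fun _ : Fin m => Finset.range (n + 1)).filter
      (fun v => ∑ i : Fin m, v i = n),
    (Nat.multinomial Finset.univ v : ℚ) * (-1 : ℚ) ^ (tupleWeight m v) *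
      (tupleWeight m v : ℚ) ^ k

/-- The formal power series `(e^t + 1)/2` over `ℚ[y]`. -/
noncomputable def eexp : PowerSeries (Polynomial ℚ) :=
  PowerSeries.mk fun k =>
    Polynomial.C ((if k = 0 then 2 else ((k.factorial : ℚ))⁻¹) / 2)

/-- The Euler polynomial `E_n^{(α)}(y)` of order `α`, defined by
    `(2/(e^t+1))^α e^{yt} = ∑_n E_n^{(α)}(y) t^n/n!`. -/
noncomputable def eulerH (α n : ℕ) : Polynomial ℚ :=
  (n.factorial : ℚ) • PowerSeries.coeff (R := Polynomial ℚ) n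
    ((PowerSeries.invOfUnit eexp 1) ^ α * expPoly)

/-! ### Auxiliary development -/

/-- `pexp p` is the exponential series `e^{pt}`. -/
noncomputable def pexp (p : Polynomial ℚ) : PowerSeries (Polynomial ℚ) :=
  PowerSeries.mk fun k => Polynomial.C ((k.factorial : ℚ)⁻¹) * p ^ k

lemma coeff_pexp (p : Polynomial ℚ) (k : ℕ) :
    PowerSeries.coeff (R := Polynomial ℚ) k (pexp p) = Polynomial.C ((k.factorial : ℚ)⁻¹) * p ^ k :=
  PowerSeries.coeff_mk _ _

lemma inv_fact_mul {i k : ℕ} (h : i ≤ k) :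
    (i.factorial : ℚ)⁻¹ * ((k - i).factorial : ℚ)⁻¹ = (k.factorial : ℚ)⁻¹ * (k.choose i : ℚ) := by
  rw [Nat.cast_choose ℚ h]
  have h1 : (i.factorial : ℚ) ≠ 0 := Nat.cast_ne_zero.mpr i.factorial_ne_zero
  have h2 : ((k - i).factorial : ℚ) ≠ 0 := Nat.cast_ne_zero.mpr (k - i).factorial_ne_zero
  have h3 : (k.factorial : ℚ) ≠ 0 := Nat.cast_ne_zero.mpr k.factorial_ne_zero
  field_simp

lemma pexp_mul (p q : Polynomial ℚ) : pexp p * pexp q = pexp (p + q) := by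
  refine PowerSeries.ext fun k => ?_
  rw [PowerSeries.coeff_mul]
  rw [Finset.Nat.sum_antidiagonal_eq_sum_range_succ_mk]
  rw [coeff_pexp]
  rw [add_pow]
  rw [Finset.mul_sum]
  apply Finset.sum_congr rfl
  intro i hi
  rw [Finset.mem_range, Nat.lt_succ_iff] at hi
  rw [coeff_pexp, coeff_pexp]
  rw [show Polynomial.C ((i.factorial : ℚ)⁻¹) * p ^ i *
      (Polynomial.C (((k - i).factorial : ℚ)⁻¹) * q ^ (k - i)) =
      Polynomial.C ((i.factorial : ℚ)⁻¹ * ((k - i).factorial : ℚ)⁻¹) * (p ^ i * q ^ (k - i)) by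
    rw [map_mul]; ring]
  rw [inv_fact_mul hi, map_mul, Polynomial.C_eq_natCast]
  ring

lemma pexp_zero : pexp 0 = 1 := by
  refine PowerSeries.ext fun k => ?_
  rw [coeff_pexp, PowerSeries.coeff_one]
  cases k with
  | zero => simp
  | succ k => simp

lemma pexp_prod {ι : Type*} (s : Finset ι) (p : ι → Polynomial ℚ) :
    ∏ i ∈ s, pexp (p i) = pexp (∑ i ∈ s, p i) := by
  classical
  induction s using Finset.cons_induction with
  | empty => simp [pexp_zero]
  | cons a s ha ih => rw [Finset.prod_cons, ih, pexp_mul, Finset.sum_cons]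

lemma pexp_pow (p : Polynomial ℚ) (j : ℕ) : pexp p ^ j = pexp (j • p) := by
  induction j with
  | zero => simp [pexp_zero]
  | succ j ih => rw [pow_succ, ih, pexp_mul, succ_nsmul]

/-- The alternating sum `∑_{j=1}^m (-1)^j e^{jt}`. -/
noncomputable def Aalt (m : ℕ) : PowerSeries (Polynomial ℚ) :=
  ∑ i : Fin m, (-1 : PowerSeries (Polynomial ℚ)) ^ (i.1 + 1) *
    pexp (Polynomial.C ((i.1 + 1 : ℕ) : ℚ))

lemma Aalt_mul {m : ℕ} (hodd : Odd m) :
    Aalt m * (1 + pexp (Polynomial.C 1)) =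
      -(pexp (Polynomial.C 1) * (1 + pexp (Polynomial.C (m : ℚ)))) := by
  set g : ℕ → PowerSeries (Polynomial ℚ) :=
    fun j => (-1) ^ j * pexp (Polynomial.C (j : ℚ)) with hg
  have key : ∀ j : ℕ,
      ((-1 : PowerSeries (Polynomial ℚ)) ^ (j + 1) * pexp (Polynomial.C ((j + 1 : ℕ) : ℚ))) *
        (1 + pexp (Polynomial.C 1)) = g (j + 1) - g (j + 2) := by
    intro j
    have hc : Polynomial.C (((j + 1 : ℕ)) : ℚ) + Polynomial.C 1 =
        Polynomial.C (((j + 2 : ℕ)) : ℚ) := by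
      rw [← map_add]; congr 1; push_cast; ring
    simp only [hg]
    rw [mul_add, mul_one, mul_assoc, pexp_mul, hc, pow_succ, pow_succ]
    ring
  have step1 : Aalt m * (1 + pexp (Polynomial.C 1)) = ∑ i ∈ range m, (g (i + 1) - g (i + 2)) := by
    rw [Aalt, Finset.sum_mul,
      Fin.sum_univ_eq_sum_range (fun j => ((-1 : PowerSeries (Polynomial ℚ)) ^ (j + 1) *
        pexp (Polynomial.C ((j + 1 : ℕ) : ℚ))) * (1 + pexp (Polynomial.C 1))) m]
    exact Finset.sum_congr rfl fun i _ => key i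
  have step2 : ∑ i ∈ range m, (g (i + 1) - g (i + 2)) = g 1 - g (m + 1) :=
    Finset.sum_range_sub' (fun i => g (i + 1)) m
  rw [step1, step2, hg]
  have h1 : ((-1 : PowerSeries (Polynomial ℚ)) ^ (m + 1)) = 1 := by
    rw [pow_succ, hodd.neg_one_pow]; ring
  have hc2 : Polynomial.C (((m + 1 : ℕ)) : ℚ) = Polynomial.C 1 + Polynomial.C ((m : ℕ) : ℚ) := by
    rw [← map_add]; congr 1; push_cast; ring
  simp only [h1, pow_one, one_mul]
  rw [hc2, ← pexp_mul]
  push_cast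
  ring

lemma eexp_eq : eexp = PowerSeries.C (R := Polynomial ℚ) (Polynomial.C (2⁻¹ : ℚ)) *
    (1 + pexp (Polynomial.C 1)) := by
  refine PowerSeries.ext fun k => ?_
  rw [PowerSeries.coeff_C_mul, map_add, PowerSeries.coeff_one, coeff_pexp, eexp,
    PowerSeries.coeff_mk]
  cases k with
  | zero =>
    norm_num
    rw [show (2:ℚ[X]) = Polynomial.C (2:ℚ) from (map_ofNat Polynomial.C 2).symm, ← map_mul]
    norm_num
  | succ k =>
    rw [if_neg k.succ_ne_zero, if_neg k.succ_ne_zero, Polynomial.C_1, one_pow, mul_one, zero_add,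
      ← map_mul]
    congr 1
    ring

/-- substitution `x ↦ x/m` in coefficients -/
noncomputable def subst' (m : ℕ) : Polynomial ℚ →+* Polynomial ℚ :=
  Polynomial.eval₂RingHom Polynomial.C (Polynomial.C ((m : ℚ)⁻¹) * Polynomial.X)

lemma subst'_C (m : ℕ) (a : ℚ) : subst' m (Polynomial.C a) = Polynomial.C a :=
  Polynomial.eval₂_C _ _

lemma subst'_apply (m : ℕ) (p : Polynomial ℚ) :
    subst' m p = p.comp (Polynomial.C ((m : ℚ)⁻¹) * Polynomial.X) := rfl

/-- the substitution `t ↦ mt`, `x ↦ x/m` -/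
noncomputable def tau (m : ℕ) : PowerSeries (Polynomial ℚ) →+* PowerSeries (Polynomial ℚ) :=
  (PowerSeries.rescale (Polynomial.C (m : ℚ))).comp (PowerSeries.map (subst' m))

lemma coeff_tau (m : ℕ) (f : PowerSeries (Polynomial ℚ)) (k : ℕ) :
    PowerSeries.coeff (R := Polynomial ℚ) k (tau m f) =
      Polynomial.C ((m : ℚ) ^ k) * subst' m (PowerSeries.coeff (R := Polynomial ℚ) k f) := by
  rw [tau, RingHom.comp_apply, PowerSeries.coeff_rescale, PowerSeries.coeff_map, map_pow]

lemma tau_pexp_C (m : ℕ) (c : ℚ) :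
    tau m (pexp (Polynomial.C c)) = pexp (Polynomial.C ((m : ℚ) * c)) := by
  refine PowerSeries.ext fun k => ?_
  rw [coeff_tau, coeff_pexp, coeff_pexp, ← map_pow, ← map_mul, subst'_C, ← map_pow, ← map_mul,
    ← map_mul]
  congr 1
  rw [mul_pow]
  ring

lemma tau_pexp_X (m : ℕ) (hm : 0 < m) : tau m (pexp Polynomial.X) = pexp Polynomial.X := by
  have hm' : (m : ℚ) ≠ 0 := Nat.cast_ne_zero.mpr hm.ne'
  refine PowerSeries.ext fun k => ?_
  rw [coeff_tau, coeff_pexp]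
  rw [subst'_apply, Polynomial.mul_comp, Polynomial.C_comp, Polynomial.pow_comp,
    Polynomial.X_comp]
  rw [mul_pow, ← map_pow]
  rw [show Polynomial.C ((m:ℚ)^k) * (Polynomial.C ((k.factorial:ℚ)⁻¹) *
      (Polynomial.C (((m:ℚ)⁻¹)^k) * Polynomial.X^k)) =
      (Polynomial.C ((m:ℚ)^k) * Polynomial.C (((m:ℚ)⁻¹)^k)) *
        (Polynomial.C ((k.factorial:ℚ)⁻¹) * Polynomial.X^k) by ring]
  rw [← map_mul]
  rw [show (m:ℚ)^k * ((m:ℚ)⁻¹)^k = 1 by rw [← mul_pow, mul_inv_cancel₀ hm', one_pow]]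
  rw [map_one, one_mul]

lemma tau_CC (m : ℕ) (a : ℚ) :
    tau m (PowerSeries.C (R := Polynomial ℚ) (Polynomial.C a)) =
      PowerSeries.C (R := Polynomial ℚ) (Polynomial.C a) := by
  refine PowerSeries.ext fun k => ?_
  rw [coeff_tau]
  cases k with
  | zero => simp [PowerSeries.coeff_C, subst'_C]
  | succ k => simp [PowerSeries.coeff_C]

lemma filter_eq_piAntidiag (n m : ℕ) :
    (Fintype.piFinset fun _ : Fin m => Finset.range (n + 1)).filter
      (fun v => ∑ i : Fin m, v i = n) = Finset.piAntidiag Finset.univ n := by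
  ext v
  simp only [Finset.mem_filter, Fintype.mem_piFinset, Finset.mem_range, Finset.mem_piAntidiag,
    Finset.mem_univ, implies_true, and_true, ne_eq]
  constructor
  · rintro ⟨-, h⟩; exact h
  · intro h
    refine ⟨fun i => Nat.lt_succ_of_le ?_, h⟩
    rw [← h]
    exact Finset.single_le_sum (fun j _ => Nat.zero_le _) (Finset.mem_univ i)

lemma coeff_Apow (n m k : ℕ) :
    PowerSeries.coeff (R := Polynomial ℚ) k ((Aalt m) ^ n) =
      Polynomial.C ((k.factorial : ℚ)⁻¹ * multiAltPowerSum n m k) := by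
  rw [Aalt, Finset.sum_pow_eq_sum_piAntidiag, ← filter_eq_piAntidiag n m, map_sum,
    multiAltPowerSum, Finset.mul_sum, map_sum]
  refine Finset.sum_congr rfl fun v hv => ?_
  have h1 : ∏ i : Fin m, (((-1 : PowerSeries (Polynomial ℚ)) ^ (i.1 + 1)) ^ (v i)) =
      (-1 : PowerSeries (Polynomial ℚ)) ^ (tupleWeight m v) := by
    simp_rw [← pow_mul]
    rw [Finset.prod_pow_eq_pow_sum, tupleWeight]
  have h2 : ∏ i : Fin m, (pexp (Polynomial.C ((i.1 + 1 : ℕ) : ℚ))) ^ (v i) =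
      pexp (Polynomial.C ((tupleWeight m v : ℕ) : ℚ)) := by
    simp_rw [pexp_pow]
    rw [pexp_prod]
    have harg : (∑ i : Fin m, v i • Polynomial.C ((i.1 + 1 : ℕ) : ℚ)) =
        Polynomial.C ((tupleWeight m v : ℕ) : ℚ) := by
      rw [tupleWeight, Nat.cast_sum, map_sum Polynomial.C _ _]
      apply Finset.sum_congr rfl
      intro i _
      rw [nsmul_eq_mul, Nat.cast_mul, map_mul, ← map_natCast (Polynomial.C : ℚ →+* ℚ[X]) (v i)]
      ring
    rw [harg]
  simp only [mul_pow]
  rw [Finset.prod_mul_distrib, h1, h2]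
  have e1 : (PowerSeries.C (R := Polynomial ℚ)) (Polynomial.C ((Nat.multinomial Finset.univ v : ℕ) : ℚ))
      = ((Nat.multinomial Finset.univ v : ℕ) : PowerSeries (Polynomial ℚ)) := by
    rw [map_natCast, map_natCast]
  have e2 : (PowerSeries.C (R := Polynomial ℚ)) (Polynomial.C ((-1 : ℚ) ^ (tupleWeight m v)))
      = (-1 : PowerSeries (Polynomial ℚ)) ^ (tupleWeight m v) := by
    rw [map_pow, map_pow, map_neg, map_neg, map_one, map_one]
  rw [show ((Nat.multinomial Finset.univ v : ℕ) : PowerSeries (Polynomial ℚ)) *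
      ((-1 : PowerSeries (Polynomial ℚ)) ^ (tupleWeight m v) *
        pexp (Polynomial.C ((tupleWeight m v : ℕ) : ℚ))) =
      (PowerSeries.C (R := Polynomial ℚ)) (Polynomial.C (((Nat.multinomial Finset.univ v : ℕ) : ℚ) *
        (-1 : ℚ) ^ (tupleWeight m v))) * pexp (Polynomial.C ((tupleWeight m v : ℕ) : ℚ)) by
    rw [map_mul, map_mul, e1, e2, mul_assoc]]
  rw [PowerSeries.coeff_C_mul, coeff_pexp, ← map_pow, ← map_mul, ← map_mul]
  congr 1
  ring

lemma fact_identity {k s t : ℕ} (hks : k ≤ s) (hst : s ≤ t) :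
    (t.factorial : ℚ) * ((k.factorial : ℚ)⁻¹ * ((s - k).factorial : ℚ)⁻¹ *
        ((t - s).factorial : ℚ)⁻¹)
      = (s.choose k : ℚ) * (t.choose s : ℚ) := by
  rw [Nat.cast_choose ℚ hks, Nat.cast_choose ℚ hst]
  have h1 : (k.factorial : ℚ) ≠ 0 := Nat.cast_ne_zero.mpr k.factorial_ne_zero
  have h2 : ((s - k).factorial : ℚ) ≠ 0 := Nat.cast_ne_zero.mpr (s - k).factorial_ne_zero
  have h3 : ((t - s).factorial : ℚ) ≠ 0 := Nat.cast_ne_zero.mpr (t - s).factorial_ne_zero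
  have h4 : (s.factorial : ℚ) ≠ 0 := Nat.cast_ne_zero.mpr s.factorial_ne_zero
  field_simp

lemma C_mul_collect (w x y z : ℚ) (p : Polynomial ℚ) :
    Polynomial.C w * ((Polynomial.C x * Polynomial.C y) * (Polynomial.C z * p)) =
      Polynomial.C (w * x * y * z) * p := by
  rw [map_mul, map_mul, map_mul]; ring

/-- Theorem 5 of Kim–Kim: for `n, m ≥ 1` with `m` odd,
`E_{n-1}^{(n)}(x) = (-1)^n ∑_{s=0}^{n-1} ∑_{k=0}^{s} C(s,k)C(n-1,s)(-n)^{s-k} T_k^{(n)}(m)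
    m^{n-s-1} E_{n-1-s}^{(n)}(x/m)`. -/
theorem kim_thm5 (n m : ℕ) (hn : 0 < n) (hm : 0 < m) (hodd : Odd m) :
    eulerH n (n - 1)
      = Polynomial.C ((-1 : ℚ) ^ n) *
          ∑ s ∈ Finset.range n, ∑ k ∈ Finset.range (s + 1),
            Polynomial.C ((s.choose k : ℚ) * ((n - 1).choose s : ℚ) * (-(n : ℚ)) ^ (s - k) *
                multiAltPowerSum n m k * (m : ℚ) ^ (n - s - 1)) *
              (eulerH n (n - 1 - s)).comp (Polynomial.C ((m : ℚ)⁻¹) * Polynomial.X) := by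
  classical
  set D : PowerSeries (Polynomial ℚ) := PowerSeries.invOfUnit eexp 1 with hDdef
  have hcc : PowerSeries.constantCoeff (R := Polynomial ℚ) eexp = 1 := by
    rw [eexp, PowerSeries.constantCoeff_mk]
    norm_num
  have hD : eexp * D = 1 := PowerSeries.mul_invOfUnit eexp 1 (by rw [hcc, Units.val_one])
  have hTD : tau m eexp * tau m D = 1 := by rw [← map_mul, hD, map_one]
  -- tau of eexp
  have hτe : tau m eexp = PowerSeries.C (R := Polynomial ℚ) (Polynomial.C (2⁻¹ : ℚ)) *
      (1 + pexp (Polynomial.C ((m : ℕ) : ℚ))) := by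
    rw [eexp_eq, map_mul, tau_CC, map_add, map_one, tau_pexp_C, mul_one]
  -- step 1: A * eexp = -(pexp 1 * tau eexp)
  have eq1 : Aalt m * eexp = -(pexp (Polynomial.C 1) * tau m eexp) := by
    rw [hτe, eexp_eq]
    have h := Aalt_mul hodd
    calc Aalt m * (PowerSeries.C (R := Polynomial ℚ) (Polynomial.C (2⁻¹ : ℚ)) *
          (1 + pexp (Polynomial.C 1)))
        = PowerSeries.C (R := Polynomial ℚ) (Polynomial.C (2⁻¹ : ℚ)) *
            (Aalt m * (1 + pexp (Polynomial.C 1))) := by ring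
      _ = PowerSeries.C (R := Polynomial ℚ) (Polynomial.C (2⁻¹ : ℚ)) *
            (-(pexp (Polynomial.C 1) * (1 + pexp (Polynomial.C (m : ℚ))))) := by rw [h]
      _ = -(pexp (Polynomial.C 1) * (PowerSeries.C (R := Polynomial ℚ) (Polynomial.C (2⁻¹ : ℚ)) *
            (1 + pexp (Polynomial.C ((m : ℕ) : ℚ))))) := by ring
  -- pexp(C 1)^n = pexp(C n)
  have hp1n : pexp (Polynomial.C 1) ^ n = pexp (Polynomial.C ((n : ℕ) : ℚ)) := by
    rw [pexp_pow]
    rw [nsmul_eq_mul, Polynomial.C_1, mul_one, ← map_natCast (Polynomial.C : ℚ →+* ℚ[X]) n]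
  -- step 2: power n
  have eq2 : (Aalt m) ^ n * eexp ^ n =
      (-1 : PowerSeries (Polynomial ℚ)) ^ n *
        (pexp (Polynomial.C ((n : ℕ) : ℚ)) * (tau m eexp) ^ n) := by
    calc (Aalt m) ^ n * eexp ^ n = (Aalt m * eexp) ^ n := (mul_pow _ _ _).symm
      _ = (-(pexp (Polynomial.C 1) * tau m eexp)) ^ n := by rw [eq1]
      _ = (-1 : PowerSeries (Polynomial ℚ)) ^ n *
            (pexp (Polynomial.C 1) ^ n * (tau m eexp) ^ n) := by
          rw [neg_pow, mul_pow]
      _ = _ := by rw [hp1n]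
  -- auxiliary units facts
  have hDn : eexp ^ n * D ^ n = 1 := by rw [← mul_pow, hD, one_pow]
  have hTn : (tau m eexp) ^ n * (tau m D) ^ n = 1 := by rw [← mul_pow, hTD, one_pow]
  have hP : pexp (Polynomial.C ((n : ℕ) : ℚ)) * pexp (Polynomial.C (-(n : ℚ))) = 1 := by
    rw [pexp_mul, ← map_add, add_neg_cancel, map_zero, pexp_zero]
  have hne : (-1 : PowerSeries (Polynomial ℚ)) ^ n * (-1 : PowerSeries (Polynomial ℚ)) ^ n = 1 := by
    rw [← pow_add]
    exact Even.neg_one_pow ⟨n, rfl⟩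
  -- main series identity
  have eq3 : D ^ n * pexp Polynomial.X =
      (-1 : PowerSeries (Polynomial ℚ)) ^ n *
        (((Aalt m) ^ n * pexp (Polynomial.C (-(n : ℚ)))) *
          tau m (D ^ n * pexp Polynomial.X)) := by
    have hτ : tau m (D ^ n * pexp Polynomial.X) = (tau m D) ^ n * pexp Polynomial.X := by
      rw [map_mul, map_pow, tau_pexp_X m hm]
    rw [hτ]
    linear_combination
      (-(((-1 : PowerSeries (Polynomial ℚ)) ^ n) * pexp (Polynomial.C (-(n : ℚ))) *
          (tau m D) ^ n * pexp Polynomial.X * D ^ n)) * eq2 +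
      (((-1 : PowerSeries (Polynomial ℚ)) ^ n) * pexp (Polynomial.C (-(n : ℚ))) *
          (Aalt m) ^ n * (tau m D) ^ n * pexp Polynomial.X) * hDn +
      (-(pexp (Polynomial.C (-(n : ℚ))) * pexp (Polynomial.C ((n : ℕ) : ℚ)) *
          (tau m D) ^ n * (tau m eexp) ^ n * pexp Polynomial.X * D ^ n)) * hne +
      (-(pexp (Polynomial.C (-(n : ℚ))) * pexp (Polynomial.C ((n : ℕ) : ℚ)) *
          pexp Polynomial.X * D ^ n)) * hTn +
      (-(pexp Polynomial.X * D ^ n)) * hP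
  -- expPoly = pexp X
  have hexpPoly : expPoly = pexp Polynomial.X := rfl
  -- Euler polynomial coefficients
  have hEuler : ∀ l : ℕ, PowerSeries.coeff (R := Polynomial ℚ) l (D ^ n * pexp Polynomial.X) =
      Polynomial.C ((l.factorial : ℚ)⁻¹) * eulerH n l := by
    intro l
    rw [eulerH, ← hexpPoly, ← hDdef, Polynomial.smul_eq_C_mul, ← mul_assoc, ← map_mul,
      inv_mul_cancel₀ (Nat.cast_ne_zero.mpr l.factorial_ne_zero), map_one, one_mul]
  have htauG : ∀ l : ℕ, PowerSeries.coeff (R := Polynomial ℚ) l (tau m (D ^ n * pexp Polynomial.X)) =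
      Polynomial.C ((m : ℚ) ^ l * (l.factorial : ℚ)⁻¹) *
        (eulerH n l).comp (Polynomial.C ((m : ℚ)⁻¹) * Polynomial.X) := by
    intro l
    rw [coeff_tau, hEuler l, map_mul (subst' m), subst'_C, subst'_apply, ← mul_assoc, ← map_mul]
  have hPcoeff : ∀ r : ℕ, PowerSeries.coeff (R := Polynomial ℚ) r (pexp (Polynomial.C (-(n : ℚ)))) =
      Polynomial.C ((r.factorial : ℚ)⁻¹ * (-(n : ℚ)) ^ r) := by
    intro r
    rw [coeff_pexp, ← map_pow, ← map_mul]
  have hsgn : ((-1 : PowerSeries (Polynomial ℚ))) ^ n =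
      PowerSeries.C (R := Polynomial ℚ) (Polynomial.C ((-1 : ℚ) ^ n)) := by
    rw [map_pow, map_pow, map_neg, map_neg, map_one, map_one]
  -- start the computation
  have key : eulerH n (n - 1) = (((n - 1).factorial : ℚ)) •
      PowerSeries.coeff (R := Polynomial ℚ) (n - 1) (D ^ n * pexp Polynomial.X) := by
    rw [eulerH, ← hexpPoly, ← hDdef]
  rw [key, eq3, hsgn, PowerSeries.coeff_C_mul, Polynomial.smul_eq_C_mul]
  rw [show Polynomial.C (((n - 1).factorial : ℚ)) * (Polynomial.C ((-1 : ℚ) ^ n) *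
      PowerSeries.coeff (R := Polynomial ℚ) (n - 1)
        (((Aalt m) ^ n * pexp (Polynomial.C (-(n : ℚ)))) *
          tau m (D ^ n * pexp Polynomial.X))) =
      Polynomial.C ((-1 : ℚ) ^ n) * (Polynomial.C (((n - 1).factorial : ℚ)) *
      PowerSeries.coeff (R := Polynomial ℚ) (n - 1)
        (((Aalt m) ^ n * pexp (Polynomial.C (-(n : ℚ)))) *
          tau m (D ^ n * pexp Polynomial.X))) by ring]
  congr 1
  rw [PowerSeries.coeff_mul]
  rw [Finset.Nat.sum_antidiagonal_eq_sum_range_succ_mk]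
  rw [show (n - 1).succ = n from Nat.succ_pred_eq_of_pos hn]
  rw [Finset.mul_sum]
  apply Finset.sum_congr rfl
  intro s hs
  rw [Finset.mem_range] at hs
  have hs' : s ≤ n - 1 := by omega
  rw [PowerSeries.coeff_mul]
  rw [Finset.Nat.sum_antidiagonal_eq_sum_range_succ_mk]
  rw [htauG, Finset.sum_mul, Finset.mul_sum]
  apply Finset.sum_congr rfl
  intro k hk
  rw [Finset.mem_range, Nat.lt_succ_iff] at hk
  rw [coeff_Apow n m k, hPcoeff]
  rw [C_mul_collect]
  rw [show n - s - 1 = n - 1 - s by omega]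
  congr 1
  congr 1
  have hfi := fact_identity (t := n - 1) hk hs'
  linear_combination
    ((-(n : ℚ)) ^ (s - k) * multiAltPowerSum n m k * (m : ℚ) ^ (n - 1 - s)) * hfi
end

section
/- For all positive integers n and m and every λ ∈ ℂ with λ ≠ 0, λ ≠ 1 and $\lambda^m \neq 1$, the following identity of polynomials in x over ℂ holds: $H_{n-1}^{(n)}(x\mid\lambda) \;=\; \left(\frac{1-\lambda}{1-\lambda^{m}}\right)^{n} \lambda^{mn} \sum_{s=0}^{n-1}\sum_{k=0}^{s} \binom{s}{k}\binom{n-1}{s}\,(-n)^{s-k}\, m^{n-1-s}\, S_k^{(n)}(m\mid\lambda)\, H_{n-1-s}^{(n)}\!\left(\frac{x}{m}\,\Big|\,\lambda^{m}\right)$, where $H_{n-1-s}^{(n)}(x/m \mid \lambda^m)$ denotes the polynomial $H_{n-1-s}^{(n)}(\cdot \mid \lambda^m)$ evaluated with x replaced by x/m. -/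
open PowerSeries Polynomial Finset

/-- The `λ`-analogue of the multiple power sum
    `S_k^{(n)}(m|λ) = ∑_{0 ≤ v₁,…,v_m ≤ n, v₁+⋯+v_m = n}
       (n choose v₁,…,v_m) λ^{-(v₁+2v₂+⋯+m·v_m)} (v₁+2v₂+⋯+m·v_m)^k`. -/
noncomputable def multiPowerSumL (lam : ℂ) (n m k : ℕ) : ℂ :=
  ∑ v ∈ (Fintype.piFinset fun _ : Fin m => Finset.range (n + 1)).filter
      (fun v => ∑ i : Fin m, v i = n),
    (Nat.multinomial Finset.univ v : ℂ) * lam⁻¹ ^ (tupleWeight m v) *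
      (tupleWeight m v : ℂ) ^ k

/-- The formal power series `(e^t - λ)/(1 - λ)` over `ℂ[y]`:
    constant term `(1-λ)/(1-λ) = 1`, and `1/((1-λ)·k!)` for `k > 0`. -/
noncomputable def feexp (lam : ℂ) : PowerSeries (Polynomial ℂ) :=
  PowerSeries.mk fun k =>
    Polynomial.C ((1 - lam)⁻¹ * (if k = 0 then 1 - lam else ((k.factorial : ℂ))⁻¹))

/-- The formal power series `e^{yt} = ∑_k y^k t^k/k!` over `ℂ[y]` (with `y = X`). -/
noncomputable def expPolyC : PowerSeries (Polynomial ℂ) :=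
  PowerSeries.mk fun k => Polynomial.C ((k.factorial : ℂ)⁻¹) * Polynomial.X ^ k

/-- The Frobenius–Euler polynomial `H_n^{(α)}(y | λ)` of order `α`, defined by
    `((1-λ)/(e^t-λ))^α e^{yt} = ∑_n H_n^{(α)}(y|λ) t^n/n!`. -/
noncomputable def frobeniusEulerH (lam : ℂ) (α n : ℕ) : Polynomial ℂ :=
  (n.factorial : ℂ) • PowerSeries.coeff (R := Polynomial ℂ) n
    ((PowerSeries.invOfUnit (feexp lam) 1) ^ α * expPolyC)

namespace KimAux
noncomputable section

abbrev Cc (z : ℂ) : PowerSeries (Polynomial ℂ) := PowerSeries.C (R := Polynomial ℂ) (Polynomial.C z)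
abbrev G : PowerSeries (Polynomial ℂ) := PowerSeries.exp (Polynomial ℂ)

lemma algMap (q : ℚ) : algebraMap ℚ (Polynomial ℂ) q = Polynomial.C (q : ℂ) := by
  rw [Polynomial.algebraMap_apply]; norm_num

lemma coeff_expP (k : ℕ) :
    PowerSeries.coeff (R := Polynomial ℂ) k G = Polynomial.C ((k.factorial : ℂ))⁻¹ := by
  rw [PowerSeries.coeff_exp, algMap]; push_cast; rw [one_div]

lemma feexp_eq (lam : ℂ) : feexp lam = Cc (1-lam)⁻¹ * (G - Cc lam) := by
  refine PowerSeries.ext fun k => ?_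
  rw [feexp, PowerSeries.coeff_mk, PowerSeries.coeff_C_mul, map_sub, coeff_expP,
    PowerSeries.coeff_C]
  rcases k with _ | k
  · rw [if_pos rfl, if_pos rfl, Nat.factorial_zero]
    push_cast
    rw [inv_one, ← Polynomial.C_sub, ← Polynomial.C_mul]
  · rw [if_neg (Nat.succ_ne_zero k), if_neg (Nat.succ_ne_zero k), sub_zero,
      ← Polynomial.C_mul]

lemma Cc_mul (a b : ℂ) : Cc (a * b) = Cc a * Cc b := by
  show PowerSeries.C (R := Polynomial ℂ) (Polynomial.C (a * b))
    = PowerSeries.C (R := Polynomial ℂ) (Polynomial.C a) * PowerSeries.C (R := Polynomial ℂ) (Polynomial.C b)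
  rw [Polynomial.C_mul, map_mul]

lemma Cc_pow (a : ℂ) (k : ℕ) : Cc (a ^ k) = (Cc a) ^ k := by
  show PowerSeries.C (R := Polynomial ℂ) (Polynomial.C (a ^ k)) = (PowerSeries.C (R := Polynomial ℂ) (Polynomial.C a)) ^ k
  rw [Polynomial.C_pow, map_pow]

lemma rescale_Cc (a : Polynomial ℂ) (z : ℂ) : rescale a (Cc z) = Cc z := by
  refine PowerSeries.ext fun k => ?_
  rw [coeff_rescale, PowerSeries.coeff_C]
  rcases k with _ | k <;> simp

lemma Gpow (j : ℕ) : G ^ j = rescale ((j : Polynomial ℂ)) G :=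
  PowerSeries.exp_pow_eq_rescale_exp j

lemma coeff_Gpow (j k : ℕ) :
    PowerSeries.coeff (R := Polynomial ℂ) k (G ^ j)
      = Polynomial.C ((j : ℂ)^k * ((k.factorial : ℂ))⁻¹) := by
  rw [Gpow, coeff_rescale, coeff_expP, map_mul, map_pow, map_natCast]

lemma constCoeff_feexp {lam : ℂ} (h1 : lam ≠ 1) :
    PowerSeries.constantCoeff (R := Polynomial ℂ) (feexp lam) = 1 := by
  rw [← PowerSeries.coeff_zero_eq_constantCoeff_apply, feexp, PowerSeries.coeff_mk,
    if_pos rfl, inv_mul_cancel₀ (sub_ne_zero.mpr (Ne.symm h1)), Polynomial.C_1]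

lemma feexp_mul_inv {lam : ℂ} (h1 : lam ≠ 1) :
    feexp lam * PowerSeries.invOfUnit (feexp lam) 1 = 1 :=
  PowerSeries.mul_invOfUnit _ 1 (by rw [constCoeff_feexp h1, Units.val_one])


def Dser (lam : ℂ) (m : ℕ) : PowerSeries (Polynomial ℂ) :=
  ∑ i ∈ Finset.range m, G ^ i * (Cc lam) ^ (m - 1 - i)

def Tser (lam : ℂ) (m : ℕ) : PowerSeries (Polynomial ℂ) :=
  ∑ i : Fin m, (Cc lam⁻¹) ^ (i.1 + 1) * G ^ (i.1 + 1)

lemma hD_geom (lam : ℂ) (m : ℕ) :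
    (G - Cc lam) * Dser lam m = G ^ m - Cc (lam ^ m) := by
  rw [mul_comm, Dser]
  have := geom_sum₂_mul G (Cc lam) m
  rw [this, Cc_pow]

lemma hGD {lam : ℂ} (h0 : lam ≠ 0) (m : ℕ) :
    G * Dser lam m = Cc (lam ^ m) * Tser lam m := by
  rw [Dser, Tser, Fin.sum_univ_eq_sum_range (fun i => (Cc lam⁻¹) ^ (i + 1) * G ^ (i + 1)),
    Finset.mul_sum, Finset.mul_sum]
  refine Finset.sum_congr rfl fun i hi => ?_
  have him : i + 1 ≤ m := Finset.mem_range.mp hi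
  have key : lam ^ m * (lam⁻¹) ^ (i + 1) = lam ^ (m - 1 - i) := by
    have hmm : m - 1 - i + (i + 1) = m := by omega
    rw [inv_pow, eq_comm, eq_mul_inv_iff_mul_eq₀ (pow_ne_zero _ h0), ← pow_add, hmm]
  calc G * (G ^ i * Cc lam ^ (m - 1 - i))
      = Cc (lam ^ (m-1-i)) * G ^ (i+1) := by rw [Cc_pow]; ring
    _ = Cc (lam ^ m) * ((Cc lam⁻¹) ^ (i + 1) * G ^ (i + 1)) := by
        rw [← key]; simp only [Cc_mul, Cc_pow]; ring

lemma hstar {lam : ℂ} (h1 : lam ≠ 1) (m : ℕ) (hm1 : lam ^ m ≠ 1) :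
    feexp lam * Dser lam m
      = Cc ((1 - lam)⁻¹ * (1 - lam ^ m)) * rescale ((m : Polynomial ℂ)) (feexp (lam ^ m)) := by
  have hres : rescale ((m : Polynomial ℂ)) (feexp (lam ^ m))
      = Cc (1 - lam ^ m)⁻¹ * (G ^ m - Cc (lam ^ m)) := by
    rw [feexp_eq, map_mul, map_sub, rescale_Cc, rescale_Cc, Gpow]
  have hc : ((1:ℂ) - lam)⁻¹ * (1 - lam ^ m) * (1 - lam ^ m)⁻¹ = (1 - lam)⁻¹ := by
    rw [mul_assoc, mul_inv_cancel₀ (sub_ne_zero.mpr (Ne.symm hm1)), mul_one]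
  rw [hres, feexp_eq, mul_assoc, hD_geom, ← mul_assoc, ← Cc_mul, hc]

lemma u_eq {lam : ℂ} (m : ℕ) (h1 : lam ≠ 1) (hm1 : lam ^ m ≠ 1) :
    PowerSeries.invOfUnit (feexp lam) 1
      = Cc ((1 - lam) * (1 - lam ^ m)⁻¹) * Dser lam m *
          rescale ((m : Polynomial ℂ)) (PowerSeries.invOfUnit (feexp (lam ^ m)) 1) := by
  set u := PowerSeries.invOfUnit (feexp lam) 1 with hu
  set w := rescale ((m : Polynomial ℂ)) (PowerSeries.invOfUnit (feexp (lam ^ m)) 1) with hwdef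
  have hl : (1 : ℂ) - lam ≠ 0 := sub_ne_zero.mpr (Ne.symm h1)
  have hlm : (1 : ℂ) - lam ^ m ≠ 0 := sub_ne_zero.mpr (Ne.symm hm1)
  have hw : rescale ((m : Polynomial ℂ)) (feexp (lam ^ m)) * w = 1 := by
    rw [hwdef, ← map_mul, feexp_mul_inv hm1, map_one]
  have key : feexp lam * (Cc ((1 - lam) * (1 - lam ^ m)⁻¹) * Dser lam m * w) = 1 := by
    have : feexp lam * (Cc ((1 - lam) * (1 - lam ^ m)⁻¹) * Dser lam m * w)
        = Cc ((1 - lam) * (1 - lam ^ m)⁻¹) * (feexp lam * Dser lam m) * w := by ring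
    rw [this, hstar h1 m hm1, ← mul_assoc, ← Cc_mul]
    have hsc : ((1:ℂ) - lam) * (1 - lam ^ m)⁻¹ * ((1 - lam)⁻¹ * (1 - lam ^ m)) = 1 := by
      field_simp
    rw [hsc, mul_assoc, hw]
    show PowerSeries.C (R := Polynomial ℂ) (Polynomial.C 1) * 1 = 1
    rw [Polynomial.C_1, map_one, one_mul]
  calc u = u * (feexp lam * (Cc ((1 - lam) * (1 - lam ^ m)⁻¹) * Dser lam m * w)) := by
            rw [key, mul_one]
    _ = (feexp lam * u) * (Cc ((1 - lam) * (1 - lam ^ m)⁻¹) * Dser lam m * w) := by ring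
    _ = Cc ((1 - lam) * (1 - lam ^ m)⁻¹) * Dser lam m * w := by
            rw [feexp_mul_inv h1, one_mul]

def En (n : ℕ) : PowerSeries (Polynomial ℂ) := rescale (Polynomial.C (-(n : ℂ))) G

lemma hGn (n : ℕ) : G ^ n * En n = 1 := by
  rw [Gpow, En]
  have h1 : ((n : Polynomial ℂ)) = Polynomial.C ((n : ℂ)) := by
    rw [map_natCast]
  rw [h1, PowerSeries.exp_mul_exp_eq_exp_add]
  rw [← Polynomial.C_add, add_neg_cancel, Polynomial.C_0, rescale_zero]
  show PowerSeries.C (R := Polynomial ℂ) (PowerSeries.constantCoeff G) = 1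
  rw [PowerSeries.constantCoeff_exp, map_one]

lemma coeff_En (n k : ℕ) :
    PowerSeries.coeff (R := Polynomial ℂ) k (En n)
      = Polynomial.C ((-(n:ℂ)) ^ k * ((k.factorial : ℂ))⁻¹) := by
  rw [En, coeff_rescale, coeff_expP, map_mul, map_pow]

lemma Dpow {lam : ℂ} (h0 : lam ≠ 0) (m n : ℕ) :
    Dser lam m ^ n = Cc (lam ^ (m * n)) * (Tser lam m ^ n * En n) := by
  have h1 : (G * Dser lam m) ^ n = (Cc (lam ^ m) * Tser lam m) ^ n := by rw [hGD h0]
  have h2 : G ^ n * Dser lam m ^ n = Cc (lam ^ m) ^ n * Tser lam m ^ n := by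
    rw [← mul_pow, ← mul_pow, h1]
  calc Dser lam m ^ n = Dser lam m ^ n * (G ^ n * En n) := by rw [hGn, mul_one]
    _ = (G ^ n * Dser lam m ^ n) * En n := by ring
    _ = Cc (lam ^ m) ^ n * Tser lam m ^ n * En n := by rw [h2]
    _ = Cc (lam ^ (m * n)) * (Tser lam m ^ n * En n) := by
        rw [← Cc_pow, ← pow_mul]; ring

def phiM (m : ℕ) : Polynomial ℂ →+* Polynomial ℂ :=
  (Polynomial.aeval (Polynomial.C ((m:ℂ)⁻¹) * Polynomial.X) : Polynomial ℂ →ₐ[ℂ] Polynomial ℂ).toRingHom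

lemma phiM_C (m : ℕ) (z : ℂ) : phiM m (Polynomial.C z) = Polynomial.C z := by
  show Polynomial.aeval _ (Polynomial.C z) = _
  rw [Polynomial.aeval_C, ← Polynomial.algebraMap_eq]

lemma phiM_comp (m : ℕ) (p : Polynomial ℂ) :
    phiM m p = p.comp (Polynomial.C ((m:ℂ)⁻¹) * Polynomial.X) := by
  rw [Polynomial.comp_eq_aeval]; rfl

lemma map_phiM_feexp (m : ℕ) (mu : ℂ) :
    PowerSeries.map (phiM m) (feexp mu) = feexp mu := by
  refine PowerSeries.ext fun k => ?_
  rw [PowerSeries.coeff_map, feexp, PowerSeries.coeff_mk, phiM_C]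

lemma map_phiM_inv (m : ℕ) {mu : ℂ} (h1 : mu ≠ 1) :
    PowerSeries.map (phiM m) (PowerSeries.invOfUnit (feexp mu) 1)
      = PowerSeries.invOfUnit (feexp mu) 1 := by
  set v := PowerSeries.invOfUnit (feexp mu) 1 with hv
  have h2 : feexp mu * PowerSeries.map (phiM m) v = 1 := by
    rw [← map_phiM_feexp m mu, ← map_mul, feexp_mul_inv h1, map_one]
  calc PowerSeries.map (phiM m) v = (feexp mu * v) * PowerSeries.map (phiM m) v := by
        rw [feexp_mul_inv h1, one_mul]
    _ = v * (feexp mu * PowerSeries.map (phiM m) v) := by ring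
    _ = v := by rw [h2, mul_one]

lemma rescale_map_expPolyC {m : ℕ} (hm : 0 < m) :
    rescale ((m : Polynomial ℂ)) (PowerSeries.map (phiM m) expPolyC) = expPolyC := by
  have hmC : ((m:ℂ)) ≠ 0 := Nat.cast_ne_zero.mpr hm.ne'
  refine PowerSeries.ext fun k => ?_
  rw [coeff_rescale, PowerSeries.coeff_map, expPolyC, PowerSeries.coeff_mk,
    map_mul, phiM_C, map_pow]
  have hX : phiM m Polynomial.X = Polynomial.C ((m:ℂ)⁻¹) * Polynomial.X := by
    show Polynomial.aeval _ Polynomial.X = _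
    rw [Polynomial.aeval_X]
  have hc : ((m : Polynomial ℂ)) ^ k = Polynomial.C ((m:ℂ) ^ k) := by
    rw [map_pow, map_natCast]
  rw [hX, mul_pow, ← Polynomial.C_pow, hc, ← mul_assoc, ← mul_assoc,
    mul_comm (Polynomial.C ((m:ℂ)^k)) (Polynomial.C (((k.factorial : ℕ) :ℂ))⁻¹), mul_assoc _ (Polynomial.C ((m:ℂ)^k)), ← Polynomial.C_mul,
    inv_pow, mul_inv_cancel₀ (pow_ne_zero k hmC), Polynomial.C_1, mul_one]

lemma index_eq (n m : ℕ) :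
    (Fintype.piFinset fun _ : Fin m => Finset.range (n + 1)).filter
        (fun v => ∑ i : Fin m, v i = n)
      = Finset.piAntidiag (Finset.univ : Finset (Fin m)) n := by
  ext v
  simp only [Finset.mem_filter, Fintype.mem_piFinset, Finset.mem_range, Finset.mem_piAntidiag,
    Finset.mem_univ, Nat.lt_succ_iff]
  constructor
  · rintro ⟨-, hs⟩
    exact ⟨hs, by intro i _; trivial⟩
  · rintro ⟨hs, -⟩
    exact ⟨fun i => hs ▸ Finset.single_le_sum (f := v) (fun j _ => Nat.zero_le _)
      (Finset.mem_univ i), hs⟩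

lemma Cc_natCast (N : ℕ) : ((N : ℕ) : PowerSeries (Polynomial ℂ)) = Cc ((N : ℂ)) :=
  (map_natCast ((PowerSeries.C (R := Polynomial ℂ)).comp Polynomial.C) N).symm

lemma coeff_Tn (lam : ℂ) (m n k : ℕ) :
    PowerSeries.coeff (R := Polynomial ℂ) k (Tser lam m ^ n)
      = Polynomial.C (((k.factorial : ℂ))⁻¹ * multiPowerSumL lam n m k) := by
  have hrhs : ((k.factorial : ℂ))⁻¹ * multiPowerSumL lam n m k
      = ∑ v ∈ Finset.piAntidiag (Finset.univ : Finset (Fin m)) n,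
          ((k.factorial : ℂ))⁻¹ * ((Nat.multinomial Finset.univ v : ℂ) *
            lam⁻¹ ^ (tupleWeight m v) * (tupleWeight m v : ℂ) ^ k) := by
    rw [multiPowerSumL, index_eq, Finset.mul_sum]
  rw [Tser, Finset.sum_pow_eq_sum_piAntidiag, map_sum, hrhs, map_sum]
  refine Finset.sum_congr rfl fun v hv => ?_
  have hprod : ∏ i : Fin m, ((Cc lam⁻¹) ^ (i.1 + 1) * G ^ (i.1 + 1)) ^ v i
      = Cc (lam⁻¹ ^ tupleWeight m v) * G ^ tupleWeight m v := by
    rw [tupleWeight, Cc_pow, ← Finset.prod_pow_eq_pow_sum, ← Finset.prod_pow_eq_pow_sum,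
      ← Finset.prod_mul_distrib]
    refine Finset.prod_congr rfl fun i _ => ?_
    rw [mul_pow, ← pow_mul, ← pow_mul]
  rw [hprod, Cc_natCast, ← mul_assoc, ← Cc_mul, PowerSeries.coeff_C_mul, coeff_Gpow,
    ← Polynomial.C_mul]
  congr 1
  ring

lemma coeff_EnTn (lam : ℂ) (m n nn s : ℕ) :
    PowerSeries.coeff (R := Polynomial ℂ) s (Tser lam m ^ n * En nn)
      = ∑ k ∈ Finset.range (s + 1),
          Polynomial.C (((k.factorial : ℂ))⁻¹ * multiPowerSumL lam n m k *
            ((-(nn:ℂ)) ^ (s - k) * (((s-k).factorial : ℂ))⁻¹)) := by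
  rw [PowerSeries.coeff_mul, Finset.Nat.sum_antidiagonal_eq_sum_range_succ_mk]
  refine Finset.sum_congr rfl fun k hk => ?_
  rw [coeff_Tn, coeff_En, ← Polynomial.C_mul]

lemma fact_id {s k nn : ℕ} (hks : k ≤ s) (hs : s ≤ nn) :
    ((nn.factorial : ℂ)) * (((k.factorial : ℂ))⁻¹ * (((s-k).factorial : ℂ))⁻¹ *
        (((nn-s).factorial : ℂ))⁻¹)
      = (s.choose k : ℂ) * (nn.choose s : ℂ) := by
  have h1 := Nat.choose_mul_factorial_mul_factorial hks
  have h2 := Nat.choose_mul_factorial_mul_factorial hs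
  have f1 : ((s.factorial : ℂ)) = (s.choose k : ℂ) * (k.factorial : ℂ) * ((s-k).factorial : ℂ) := by
    exact_mod_cast congrArg (Nat.cast (R := ℂ)) h1.symm
  have f2 : ((nn.factorial : ℂ))
      = (nn.choose s : ℂ) * (s.factorial : ℂ) * ((nn-s).factorial : ℂ) := by
    exact_mod_cast congrArg (Nat.cast (R := ℂ)) h2.symm
  have nz : ∀ j : ℕ, ((j.factorial : ℂ)) ≠ 0 := fun j => Nat.cast_ne_zero.mpr j.factorial_ne_zero
  rw [f2, f1]
  field_simp [nz]

lemma coeffW {lam : ℂ} {m : ℕ} (hm : 0 < m) (hm1 : lam ^ m ≠ 1) (n l : ℕ) :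
    PowerSeries.coeff (R := Polynomial ℂ) l
        (rescale ((m : Polynomial ℂ)) (PowerSeries.map (phiM m)
          ((PowerSeries.invOfUnit (feexp (lam ^ m)) 1) ^ n * expPolyC)))
      = Polynomial.C ((m:ℂ) ^ l * ((l.factorial : ℂ))⁻¹) *
          ((frobeniusEulerH (lam ^ m) n l).comp (Polynomial.C ((m : ℂ)⁻¹) * Polynomial.X)) := by
  have hcl : PowerSeries.coeff (R := Polynomial ℂ) l
        ((PowerSeries.invOfUnit (feexp (lam ^ m)) 1) ^ n * expPolyC)
      = Polynomial.C ((l.factorial : ℂ))⁻¹ * frobeniusEulerH (lam ^ m) n l := by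
    rw [frobeniusEulerH, Polynomial.smul_eq_C_mul, ← mul_assoc, ← Polynomial.C_mul,
      inv_mul_cancel₀ (Nat.cast_ne_zero.mpr l.factorial_ne_zero), Polynomial.C_1, one_mul]
  rw [coeff_rescale, PowerSeries.coeff_map, hcl, map_mul, phiM_C, phiM_comp,
    show ((m : Polynomial ℂ)) ^ l = Polynomial.C ((m:ℂ) ^ l) from by rw [map_pow, map_natCast],
    Polynomial.C_mul]
  ring

lemma coeff_Cc_mul (a : ℂ) (f : PowerSeries (Polynomial ℂ)) (k : ℕ) :
    PowerSeries.coeff (R := Polynomial ℂ) k (Cc a * f)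
      = Polynomial.C a * PowerSeries.coeff (R := Polynomial ℂ) k f :=
  PowerSeries.coeff_C_mul k f (Polynomial.C a)

lemma key_s {lam : ℂ} {m n : ℕ} (hn : 0 < n) (hm : 0 < m) (hm1 : lam ^ m ≠ 1)
    (W : PowerSeries (Polynomial ℂ))
    (hW : W = rescale ((m : Polynomial ℂ)) (PowerSeries.map (phiM m)
      ((PowerSeries.invOfUnit (feexp (lam ^ m)) 1) ^ n * expPolyC)))
    (s : ℕ) (hs : s ∈ Finset.range n) :
    Polynomial.C (((n-1).factorial : ℂ)) *
        (PowerSeries.coeff (R := Polynomial ℂ) s (Tser lam m ^ n * En n) *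
          PowerSeries.coeff (R := Polynomial ℂ) (n-1-s) W)
      = ∑ k ∈ Finset.range (s+1),
          Polynomial.C ((s.choose k : ℂ) * ((n-1).choose s : ℂ) * (-(n:ℂ)) ^ (s-k) *
              (m:ℂ) ^ (n-1-s) * multiPowerSumL lam n m k) *
            ((frobeniusEulerH (lam ^ m) n (n-1-s)).comp
              (Polynomial.C ((m : ℂ)⁻¹) * Polynomial.X)) := by
  have hsn : s ≤ n - 1 := by have := Finset.mem_range.mp hs; omega
  rw [hW, coeff_EnTn, coeffW hm hm1, Finset.sum_mul, Finset.mul_sum]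
  refine Finset.sum_congr rfl fun k hk => ?_
  have hks : k ≤ s := by have := Finset.mem_range.mp hk; omega
  rw [← mul_assoc, ← mul_assoc, ← Polynomial.C_mul, ← Polynomial.C_mul]
  congr 2
  have hfi := fact_id (nn := n - 1) hks hsn
  have hnsub : n - 1 - (n - 1 - s) = s := by omega
  linear_combination
    (multiPowerSumL lam n m k * (-(n:ℂ)) ^ (s-k) * (m:ℂ) ^ (n-1-s)) * hfi


end
end KimAux


open KimAux in
/-- Theorem 6 of Kim–Kim: for `n, m ≥ 1` and `λ ∈ ℂ` with `λ ≠ 0`, `λ ≠ 1`, `λ^m ≠ 1`,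
`H_{n-1}^{(n)}(x|λ) = ((1-λ)/(1-λ^m))^n λ^{mn} ∑_{s=0}^{n-1} ∑_{k=0}^{s}
    C(s,k)C(n-1,s)(-n)^{s-k} m^{n-1-s} S_k^{(n)}(m|λ) H_{n-1-s}^{(n)}(x/m | λ^m)`. -/
theorem kim_thm6 (n m : ℕ) (hn : 0 < n) (hm : 0 < m) (lam : ℂ)
    (h0 : lam ≠ 0) (h1 : lam ≠ 1) (hm1 : lam ^ m ≠ 1) :
    frobeniusEulerH lam n (n - 1)
      = Polynomial.C (((1 - lam) / (1 - lam ^ m)) ^ n * lam ^ (m * n)) *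
          ∑ s ∈ Finset.range n, ∑ k ∈ Finset.range (s + 1),
            Polynomial.C ((s.choose k : ℂ) * ((n - 1).choose s : ℂ) * (-(n : ℂ)) ^ (s - k) *
                (m : ℂ) ^ (n - 1 - s) * multiPowerSumL lam n m k) *
              (frobeniusEulerH (lam ^ m) n (n - 1 - s)).comp
                (Polynomial.C ((m : ℂ)⁻¹) * Polynomial.X) := by
  classical
  set W := rescale ((m : Polynomial ℂ)) (PowerSeries.map (phiM m)
      ((PowerSeries.invOfUnit (feexp (lam ^ m)) 1) ^ n * expPolyC)) with hW
  have hWalt : W = rescale ((m : Polynomial ℂ))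
      ((PowerSeries.invOfUnit (feexp (lam ^ m)) 1) ^ n) * expPolyC := by
    rw [hW, map_mul (PowerSeries.map (phiM m)), map_mul (rescale ((m : Polynomial ℂ))),
      map_pow (PowerSeries.map (phiM m)), map_phiM_inv m hm1, rescale_map_expPolyC hm]
  have hser : (PowerSeries.invOfUnit (feexp lam) 1) ^ n * expPolyC
      = Cc (((1 - lam) * (1 - lam ^ m)⁻¹) ^ n * lam ^ (m * n)) *
          ((Tser lam m ^ n * En n) * W) := by
    rw [u_eq m h1 hm1, hWalt, mul_pow, mul_pow, Dpow h0 m n,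
      ← map_pow (rescale ((m : Polynomial ℂ)))]
    simp only [Cc_mul, Cc_pow]
    ring
  have lhs_eq : frobeniusEulerH lam n (n-1)
      = (((n-1).factorial : ℂ)) • PowerSeries.coeff (R := Polynomial ℂ) (n-1)
          (Cc (((1 - lam) * (1 - lam ^ m)⁻¹) ^ n * lam ^ (m * n)) *
            ((Tser lam m ^ n * En n) * W)) := by
    rw [frobeniusEulerH, hser]
  have hrange : (n - 1).succ = n := Nat.succ_pred_eq_of_pos hn
  have hcc : ((1 - lam) / (1 - lam ^ m)) ^ n * lam ^ (m * n)
      = ((1 - lam) * (1 - lam ^ m)⁻¹) ^ n * lam ^ (m * n) := by rw [div_eq_mul_inv]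
  rw [lhs_eq, coeff_Cc_mul, PowerSeries.coeff_mul,
    Finset.Nat.sum_antidiagonal_eq_sum_range_succ_mk, hrange, hcc,
    Polynomial.smul_eq_C_mul, mul_left_comm, Finset.mul_sum]
  congr 1
  exact Finset.sum_congr rfl (key_s hn hm hm1 W hW)
end
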